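/- arXiv:1503.07686 — 3 statements merged into one kernel-verified Lean document; each statement's English description precedes it below -/
import Mathlib

section
/- Let Γ be an n×n real symmetric matrix with zero diagonal, and let σ² > 0 be such that x'Γx ≤ σ² for every x with x'𝟙 = 1. Then R := 𝟙𝟙' - σ^{-2}Γ is a correlation matrix, i.e., symmetric positive semidefinite with unit diagonal, and Γ = σ²(𝟙𝟙' - R). -/
open Matrix

theorem variogram_sufficient_conditions (n : ℕ) (σ2 : ℝ) (hσ : 0 < σ2)
    (Γ : Matrix (Fin n) (Fin n) ℝ) (hsymm : Γ.IsSymm) (hdiag : ∀ i, Γ i i = 0)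
    (hbound : ∀ x : Fin n → ℝ, x ⬝ᵥ (fun _ => (1:ℝ)) = 1 → x ⬝ᵥ Γ.mulVec x ≤ σ2) :
    ((Matrix.of fun _ _ => (1:ℝ)) - σ2⁻¹ • Γ).PosSemidef ∧
    (∀ i, (((Matrix.of fun _ _ => (1:ℝ)) - σ2⁻¹ • Γ : Matrix (Fin n) (Fin n) ℝ)) i i = 1) ∧
    Γ = σ2 • ((Matrix.of fun _ _ => (1:ℝ)) -
      ((Matrix.of fun _ _ => (1:ℝ)) - σ2⁻¹ • Γ)) := by
  -- key quadratic bound for all x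
  have key : ∀ x : Fin n → ℝ, x ⬝ᵥ Γ.mulVec x ≤ σ2 * (x ⬝ᵥ (fun _ => (1:ℝ)))^2 := by
    intro x
    set s : ℝ := x ⬝ᵥ (fun _ => (1:ℝ)) with hs
    by_cases hs0 : s = 0
    · rw [hs0]
      rcases Nat.eq_zero_or_pos n with hn | hn
      · subst hn
        simp [dotProduct]
      · -- pick y with y ⬝ᵥ 1 = 1
        set y : Fin n → ℝ := fun j => if j = ⟨0, hn⟩ then 1 else 0 with hy
        have hy1 : y ⬝ᵥ (fun _ => (1:ℝ)) = 1 := by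
          simp [hy, dotProduct]
        set c : ℝ := x ⬝ᵥ Γ.mulVec x with hc
        set b : ℝ := x ⬝ᵥ Γ.mulVec y + y ⬝ᵥ Γ.mulVec x with hb
        set d : ℝ := y ⬝ᵥ Γ.mulVec y with hd
        have hq : ∀ t : ℝ, c * t^2 + b * t + d ≤ σ2 := by
          intro t
          have h1 : (t • x + y) ⬝ᵥ (fun _ => (1:ℝ)) = 1 := by
            rw [add_dotProduct, smul_dotProduct, ← hs, hs0, hy1]
            simp
          have h2 := hbound (t • x + y) h1
          simp only [mulVec_add, mulVec_smul, add_dotProduct, smul_dotProduct,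
            dotProduct_add, dotProduct_smul, smul_eq_mul] at h2
          rw [hc, hb, hd]
          nlinarith [h2]
        have hct : ∀ t : ℝ, c * t^2 ≤ σ2 - d := by
          intro t
          have h1 := hq t
          have h2 := hq (-t)
          nlinarith
        have hcle : c ≤ 0 := by
          by_contra hcp
          push_neg at hcp
          have hd0 : d ≤ σ2 := by have := hct 0; nlinarith
          have hnn : (0:ℝ) ≤ (σ2 - d + 1) / c := by
            apply div_nonneg <;> linarith
          set t : ℝ := Real.sqrt ((σ2 - d + 1) / c) with ht
          have ht2 : t^2 = (σ2 - d + 1) / c := by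
            rw [ht, Real.sq_sqrt hnn]
          have hc' : c * t^2 = σ2 - d + 1 := by
            rw [ht2]; field_simp
          linarith [hct t]
        nlinarith [hcle]
    · have h1 : (s⁻¹ • x) ⬝ᵥ (fun _ => (1:ℝ)) = 1 := by
        rw [smul_dotProduct, ← hs]
        simp [inv_mul_cancel₀ hs0]
      have h2 := hbound (s⁻¹ • x) h1
      rw [mulVec_smul, smul_dotProduct, dotProduct_smul, smul_eq_mul, smul_eq_mul] at h2
      have hs2 : s^2 > 0 := by positivity
      have : x ⬝ᵥ Γ.mulVec x = s^2 * (s⁻¹ * (s⁻¹ * (x ⬝ᵥ Γ.mulVec x))) := by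
        field_simp
      rw [this]
      calc s^2 * (s⁻¹ * (s⁻¹ * (x ⬝ᵥ Γ.mulVec x))) ≤ s^2 * σ2 := by
            apply mul_le_mul_of_nonneg_left h2 (le_of_lt hs2)
        _ = σ2 * s^2 := by ring
  refine ⟨posSemidef_iff_dotProduct_mulVec.mpr ⟨?_, ?_⟩, ?_, ?_⟩
  · -- IsHermitian
    ext i j
    simp only [conjTranspose_apply, Matrix.sub_apply, of_apply, Matrix.smul_apply, smul_eq_mul, star_trivial]
    rw [← hsymm.apply i j]
  · intro x
    have hJ : ((Matrix.of fun _ _ => (1:ℝ)) : Matrix (Fin n) (Fin n) ℝ).mulVec x = fun _ => ∑ j, x j := by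
      ext i
      simp [mulVec, dotProduct]
    have hs : x ⬝ᵥ (fun _ => (1:ℝ)) = ∑ j, x j := by simp [dotProduct]
    have hk := key x
    rw [hs] at hk
    rw [star_trivial, sub_mulVec, dotProduct_sub, hJ, smul_mulVec,
      dotProduct_smul, smul_eq_mul]
    have hJx : x ⬝ᵥ (fun _ => ∑ j, x j) = (∑ j, x j)^2 := by
      simp [dotProduct, ← Finset.sum_mul, sq, mul_comm]
    rw [hJx]
    have h3 := mul_le_mul_of_nonneg_left hk (inv_pos.mpr hσ).le
    rw [← mul_assoc, inv_mul_cancel₀ (ne_of_gt hσ), one_mul] at h3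
    linarith
  · intro i
    simp [hdiag i]
  · ext i j
    simp only [Matrix.smul_apply, Matrix.sub_apply, of_apply, smul_eq_mul, sub_sub_cancel]
    rw [← mul_assoc, mul_inv_cancel₀ (ne_of_gt hσ), one_mul]
end

section
/- Let R be an invertible n×n correlation matrix with n ≥ 2. Then 𝟙'R⁻¹𝟙 ≠ 1. -/
open Matrix

theorem correlation_inv_quadform_ne_one (n : ℕ) (hn : 2 ≤ n)
    (R : Matrix (Fin n) (Fin n) ℝ) (hR : R.PosDef) (hdiag : ∀ i, R i i = 1) :
    (fun _ => (1:ℝ)) ⬝ᵥ R⁻¹.mulVec (fun _ => (1:ℝ)) ≠ 1 := by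
  intro ha
  set o : Fin n → ℝ := fun _ => (1:ℝ) with ho
  set x : Fin n → ℝ := R⁻¹.mulVec o with hx
  have hdet : IsUnit R.det := isUnit_iff_ne_zero.mpr hR.det_pos.ne'
  have hRx : R.mulVec x = o := by
    rw [hx, mulVec_mulVec, Matrix.mul_nonsing_inv R hdet, one_mulVec]
  have hsym : Rᵀ = R := hR.isHermitian.eq
  have hoo : o ⬝ᵥ o = (n : ℝ) := by simp [ho, dotProduct]
  have hox : o ⬝ᵥ x = 1 := ha
  have hxo : x ⬝ᵥ o = 1 := by rw [dotProduct_comm]; exact hox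
  have hxRo : x ⬝ᵥ R.mulVec o = (n : ℝ) := by
    rw [Matrix.dotProduct_mulVec, ← hsym, Matrix.vecMul_transpose, hRx, hoo]
  have hoRx : o ⬝ᵥ R.mulVec x = (n : ℝ) := by rw [hRx, hoo]
  have hxRx : x ⬝ᵥ R.mulVec x = 1 := by rw [hRx, hxo]
  -- strict bound on off-diagonal entries
  have hsymm : ∀ i j, R j i = R i j := by
    intro i j
    conv_lhs => rw [← hsym]
    rfl
  have hoff : ∀ i j : Fin n, i ≠ j → R i j < 1 := by
    intro i j hij
    set v : Fin n → ℝ := Pi.single i 1 - Pi.single j 1 with hv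
    have hvne : v ≠ 0 := by
      intro h
      have := congrFun h i
      simp [hv, Pi.single_apply, hij] at this
    have hpos := hR.dotProduct_mulVec_pos hvne
    have hcomp : star v ⬝ᵥ R.mulVec v = 2 - 2 * R i j := by
      simp only [star_trivial, hv, mulVec_sub, sub_dotProduct, dotProduct_sub,
        Matrix.mulVec_single, single_dotProduct, mul_one, one_mul,
        Pi.smul_apply, MulOpposite.op_one, one_smul, Matrix.col_apply]
      rw [hdiag i, hdiag j, hsymm i j]
      ring
    rw [hcomp] at hpos
    linarith
  -- sum of all entries < n^2
  have hS : o ⬝ᵥ R.mulVec o < (n : ℝ)^2 := by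
    have hSeq : o ⬝ᵥ R.mulVec o = ∑ i, ∑ j, R i j := by
      simp [ho, dotProduct, mulVec]
    rw [hSeq]
    have hne : Nonempty (Fin n) := ⟨⟨0, by omega⟩⟩
    have hrow : ∀ i : Fin n, ∑ j, R i j < (n : ℝ) := by
      intro i
      have : Nontrivial (Fin n) := Fin.nontrivial_iff_two_le.mpr hn
      obtain ⟨j, hj⟩ := exists_ne i
      have hlt : ∑ j, R i j < ∑ _j : Fin n, (1 : ℝ) := by
        apply Finset.sum_lt_sum
        · intro k _
          rcases eq_or_ne i k with rfl | hik
          · rw [hdiag i]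
          · exact (hoff i k hik).le
        · exact ⟨j, Finset.mem_univ j, hoff i j (Ne.symm hj)⟩
      simpa using hlt
    calc ∑ i, ∑ j, R i j < ∑ _i : Fin n, (n : ℝ) :=
          Finset.sum_lt_sum_of_nonempty (Finset.univ_nonempty) (fun i _ => hrow i)
      _ = (n : ℝ)^2 := by simp [sq]
  -- quadratic form at o - n • x is nonneg
  have hy : (0 : ℝ) ≤ (o - (n:ℝ) • x) ⬝ᵥ R.mulVec (o - (n:ℝ) • x) := by
    have := hR.posSemidef.dotProduct_mulVec_nonneg (o - (n:ℝ) • x)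
    simpa using this
  have hexp : (o - (n:ℝ) • x) ⬝ᵥ R.mulVec (o - (n:ℝ) • x)
      = o ⬝ᵥ R.mulVec o - (n:ℝ)^2 := by
    simp only [mulVec_sub, mulVec_smul, sub_dotProduct, dotProduct_sub,
      smul_dotProduct, dotProduct_smul, smul_eq_mul]
    rw [hoRx, hxRo, hxRx]
    ring
  rw [hexp] at hy
  linarith
end

section
/- Let Σ = σ²R be invertible with R a correlation matrix, and let Γ = σ²(𝟙𝟙' - R) = σ²𝟙𝟙' - Σ. Then Γ is invertible and Γ⁻¹ = -Σ⁻¹ - (σ⁻² - 𝟙'Σ⁻¹𝟙)⁻¹ Σ⁻¹𝟙𝟙'Σ⁻¹. -/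
open Matrix

theorem variogram_inverse (n : ℕ) (hn : 2 ≤ n) (σ2 : ℝ) (hσ : 0 < σ2)
    (R : Matrix (Fin n) (Fin n) ℝ) (hR : R.PosDef) (hdiag : ∀ i, R i i = 1)
    (S Γ : Matrix (Fin n) (Fin n) ℝ) (hS : S = σ2 • R)
    (hΓ : Γ = σ2 • (Matrix.of fun _ _ => (1:ℝ)) - S) :
    IsUnit Γ.det ∧
    Γ⁻¹ = -S⁻¹ - (σ2⁻¹ - (fun _ => (1:ℝ)) ⬝ᵥ S⁻¹.mulVec (fun _ => (1:ℝ)))⁻¹ •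
      (S⁻¹ * (Matrix.of fun _ _ => (1:ℝ)) * S⁻¹) := by
  set J : Matrix (Fin n) (Fin n) ℝ := Matrix.of fun _ _ => (1:ℝ) with hJ
  set u : Fin n → ℝ := fun _ => (1:ℝ) with hu
  have hRdet : IsUnit R.det := hR.det_pos.ne'.isUnit
  have hRinv : R * R⁻¹ = 1 := Matrix.mul_nonsing_inv R hRdet
  have hRinv' : R⁻¹ * R = 1 := Matrix.nonsing_inv_mul R hRdet
  have hσ0 : σ2 ≠ 0 := hσ.ne'
  have hSdet : IsUnit S.det := by
    rw [hS, Matrix.det_smul, Fintype.card_fin]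
    exact (IsUnit.pow n hσ0.isUnit).mul hRdet
  have hSinv : S * S⁻¹ = 1 := Matrix.mul_nonsing_inv S hSdet
  -- y = R⁻¹ 1
  set y : Fin n → ℝ := R⁻¹.mulVec u with hy
  have hRy : R.mulVec y = u := by
    rw [hy, Matrix.mulVec_mulVec, hRinv, Matrix.one_mulVec]
  -- 1' R⁻¹ 1 ≠ 1
  have ht : u ⬝ᵥ y ≠ 1 := by
    intro h
    have hsym : Rᵀ = R := by
      have := hR.1
      simpa [Matrix.IsHermitian] using this
    have hyRdot : ∀ v : Fin n → ℝ, y ⬝ᵥ R.mulVec v = u ⬝ᵥ v := by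
      intro v
      rw [Matrix.dotProduct_mulVec]
      congr 1
      calc y ᵥ* R = y ᵥ* Rᵀ := by rw [hsym]
        _ = R *ᵥ y := Matrix.vecMul_transpose R y
        _ = u := hRy
    have key : ∀ i : Fin n, y = Pi.single i 1 := by
      intro i
      have hx : (Pi.single i 1 - y) ⬝ᵥ R.mulVec (Pi.single i 1 - y) = 0 := by
        rw [Matrix.mulVec_sub, sub_dotProduct, dotProduct_sub,
          dotProduct_sub, hRy, hyRdot]
        have h1 : (Pi.single i 1 : Fin n → ℝ) ⬝ᵥ R.mulVec (Pi.single i 1) = R i i := by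
          simp [dotProduct, Matrix.mulVec, Pi.single_apply, Finset.mul_sum]
        have h2 : (Pi.single i 1 : Fin n → ℝ) ⬝ᵥ u = 1 := by
          simp [dotProduct, Pi.single_apply, hu]
        have h3 : u ⬝ᵥ Pi.single i 1 = 1 := by
          simp [dotProduct, Pi.single_apply, hu]
        rw [h1, h2, h3, hdiag, dotProduct_comm y u, h]
        ring
      by_contra hne
      have := hR.dotProduct_mulVec_pos (x := Pi.single i 1 - y) (sub_ne_zero.mpr (fun he => hne he.symm))
      rw [star_trivial, hx] at this
      exact lt_irrefl 0 this
    have h0 : (⟨0, by omega⟩ : Fin n) ≠ (⟨1, by omega⟩ : Fin n) := by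
      simp [Fin.ext_iff]
    have := (key ⟨0, by omega⟩).symm.trans (key ⟨1, by omega⟩)
    have h01 := congrFun this ⟨0, by omega⟩
    simp [Pi.single_apply, h0.symm, Fin.ext_iff] at h01
  -- scalar quantities
  set s : ℝ := u ⬝ᵥ S⁻¹.mulVec u with hs
  set c : ℝ := σ2⁻¹ - s with hc
  have hSinvR : S⁻¹ = σ2⁻¹ • R⁻¹ := by
    apply Matrix.inv_eq_right_inv
    rw [hS, Matrix.smul_mul, Matrix.mul_smul, smul_smul, hRinv, mul_inv_cancel₀ hσ0, one_smul]
  have hst : s = σ2⁻¹ * (u ⬝ᵥ y) := by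
    rw [hs, hSinvR, Matrix.smul_mulVec, dotProduct_smul, hy]
    simp
  have hcne : c ≠ 0 := by
    rw [hc, hst]
    intro h
    apply ht
    have := sub_eq_zero.mp h
    field_simp at this
    linarith [this]
  -- key matrix identity : J * M * J = (u ⬝ᵥ M.mulVec u) • J
  have hJMJ : ∀ M : Matrix (Fin n) (Fin n) ℝ, J * M * J = (u ⬝ᵥ M.mulVec u) • J := by
    intro M
    ext i j
    simp only [Matrix.mul_apply, Matrix.smul_apply, hJ, Matrix.of_apply, hu,
      dotProduct, Matrix.mulVec, smul_eq_mul]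
    simp [Finset.sum_mul, Finset.mul_sum]
    rw [Finset.sum_comm]
  -- the candidate inverse
    -- B = -S⁻¹ - c⁻¹ • (S⁻¹ * J * S⁻¹)
  have key : Γ * (-S⁻¹ - c⁻¹ • (S⁻¹ * J * S⁻¹)) = 1 := by
    have hJS : (σ2 • J - S) * (-S⁻¹ - c⁻¹ • (S⁻¹ * J * S⁻¹)) =
        (-σ2 - σ2 * c⁻¹ * s + c⁻¹) • (J * S⁻¹) + 1 := by
      have e1 : J * S⁻¹ * J = s • J := hJMJ S⁻¹
      have expand : (σ2 • J - S) * (-S⁻¹ - c⁻¹ • (S⁻¹ * J * S⁻¹)) =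
          -(σ2 • (J * S⁻¹)) - (σ2 * c⁻¹) • (J * S⁻¹ * J * S⁻¹)
            + S * S⁻¹ + c⁻¹ • ((S * S⁻¹) * J * S⁻¹) := by
        simp only [Matrix.sub_mul, Matrix.mul_sub, Matrix.mul_neg, Matrix.smul_mul,
          Matrix.mul_smul, smul_smul, Matrix.mul_assoc]
        module
      rw [expand, e1, hSinv, Matrix.one_mul, Matrix.smul_mul, smul_smul]
      module
    rw [hΓ, hJS]
    have h1 : σ2 * c = 1 - σ2 * s := by
      rw [hc]
      field_simp
    have h0 : (-σ2 - σ2 * c⁻¹ * s + c⁻¹) = 0 := by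
      field_simp
      linarith [h1]
    rw [h0, zero_smul, zero_add]
  exact ⟨Matrix.isUnit_det_of_right_inverse key, Matrix.inv_eq_right_inv key⟩
end
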